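/- Let q, a, x, u, y ∈ ℂ with 0 < |q| < 1, |u| ≤ 1, |a y| < 1, x ≠ 0, and 1 - a q^j x ≠ 0 for all j ≥ 0, and let n ∈ ℕ. Then ∑_{i=0}^{n} (u q)^{C(i,2)} [n choose i]_q ((-a y)^i / (a q^n x;q)_i) · ∑_{m=0}^{∞} u^{C(m,2)} (q^n;q)_m (u^i a y)^m / ((q;q)_m (a q^{n+i} x;q)_m) = 1. -/

import Mathlib

/-- The finite q-shifted factorial (a;q)_n = ∏_{j=0}^{n-1} (1 - a q^j). -/
noncomputable def qPoch (q a : ℂ) (n : ℕ) : ℂ :=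
  ∏ j ∈ Finset.range n, (1 - a * q ^ j)

/-- The q-binomial coefficient [n choose k]_q = (q;q)_n / ((q;q)_k (q;q)_{n-k}). -/
noncomputable def qBinom (q : ℂ) (n k : ℕ) : ℂ :=
  qPoch q q n / (qPoch q q k * qPoch q q (n - k))


lemma qPoch_zero (q a : ℂ) : qPoch q a 0 = 1 := by simp [qPoch]

lemma qPoch_succ (q a : ℂ) (n : ℕ) :
    qPoch q a (n+1) = qPoch q a n * (1 - a * q ^ n) := by
  simp [qPoch, Finset.prod_range_succ]

lemma qPoch_add (q a : ℂ) (i m : ℕ) :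
    qPoch q a (i + m) = qPoch q a i * qPoch q (a * q ^ i) m := by
  rw [qPoch, Finset.prod_range_add, qPoch, qPoch]
  congr 1
  apply Finset.prod_congr rfl
  intro j _
  rw [pow_add]; ring

lemma qPoch_one_left (q a : ℂ) (n : ℕ) :
    qPoch q a (n+1) = (1 - a) * qPoch q (a*q) n := by
  rw [show n+1 = 1+n by omega, qPoch_add q a 1 n]
  simp [qPoch, pow_one]

noncomputable def Complex.abs : AbsoluteValue ℂ ℝ where
  toFun := fun z => ‖z‖
  map_mul' := norm_mul
  nonneg' := norm_nonneg
  eq_zero' := fun _ => norm_eq_zero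
  add_le' := norm_add_le

lemma Complex.norm_eq_abs (z : ℂ) : ‖z‖ = Complex.abs z := rfl

lemma one_sub_ne_zero_of_abs_lt {z : ℂ} (h : Complex.abs z < 1) : 1 - z ≠ 0 := by
  intro hc
  have : z = 1 := by linear_combination -hc
  rw [this] at h; simp at h

lemma qPoch_ne_zero_of_abs_lt {q c : ℂ} (hq1 : Complex.abs q < 1)
    (hc : Complex.abs c < 1) (m : ℕ) : qPoch q c m ≠ 0 := by
  rw [qPoch]
  apply Finset.prod_ne_zero_iff.2
  intro j _
  apply one_sub_ne_zero_of_abs_lt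
  rw [map_mul, map_pow]
  calc Complex.abs c * Complex.abs q ^ j ≤ Complex.abs c * 1 := by
        gcongr
        exact pow_le_one₀ (Complex.abs.nonneg q) hq1.le
  _ < 1 := by rwa [mul_one]

lemma qPoch_q_ne_zero {q : ℂ} (hq1 : Complex.abs q < 1) (m : ℕ) : qPoch q q m ≠ 0 :=
  qPoch_ne_zero_of_abs_lt hq1 hq1 m

lemma qPoch_qpow_ne_zero {q : ℂ} (hq1 : Complex.abs q < 1) (n : ℕ) (m : ℕ) :
    qPoch q (q^(n+1)) m ≠ 0 := by
  apply qPoch_ne_zero_of_abs_lt hq1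
  rw [map_pow]
  calc Complex.abs q ^ (n+1) ≤ Complex.abs q ^ 1 :=
        pow_le_pow_of_le_one (Complex.abs.nonneg q) hq1.le (by omega)
  _ < 1 := by rwa [pow_one]

noncomputable def Aa (q : ℂ) (n i : ℕ) : ℂ :=
  if i ≤ n then (-1)^i * q^(i.choose 2) * (qPoch q q n / (qPoch q q i * qPoch q q (n-i))) else 0

noncomputable def Bb (q : ℂ) (n m : ℕ) : ℂ := qPoch q (q^n) m / qPoch q q m

section comb
variable {q : ℂ} (hq1 : Complex.abs q < 1)
include hq1

lemma Aa_zero (n : ℕ) : Aa q n 0 = 1 := by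
  rw [Aa, if_pos (Nat.zero_le n)]
  simp [qPoch_zero]
  exact qPoch_q_ne_zero hq1 n

lemma Aa_succ_succ (n i : ℕ) :
    Aa q (n+1) (i+1) = Aa q n (i+1) - q^n * Aa q n i := by
  rcases lt_or_ge n i with hni | hni
  · -- i ≥ n+1? i+1 > n+1, i+1 > n, i > n : all ifs false... careful i could equal n? no n < i
    rw [Aa, if_neg (by omega), Aa, if_neg (by omega), Aa, if_neg (by omega)]
    ring
  rcases eq_or_lt_of_le hni with heq | hlt
  · subst heq
    rw [Aa, if_pos (le_refl _), Aa, if_neg (by omega), Aa, if_pos (le_refl _)]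
    simp only [Nat.sub_self, qPoch_zero]
    have h1 : (i+1).choose 2 = i.choose 2 + i := by
      rw [Nat.choose_succ_succ]; simp [Nat.choose_one_right]; omega
    have hqn : qPoch q q (i+1) ≠ 0 := qPoch_q_ne_zero hq1 (i+1)
    have hqn' : qPoch q q i ≠ 0 := qPoch_q_ne_zero hq1 i
    field_simp
    rw [h1, pow_add]
    ring
  · -- i + 1 ≤ n
    obtain ⟨d, rfl⟩ : ∃ d, n = i + 1 + d := ⟨n - (i+1), by omega⟩
    rw [Aa, if_pos (by omega), Aa, if_pos (by omega), Aa, if_pos (by omega)]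
    have e1 : i + 1 + d + 1 - (i + 1) = d + 1 := by omega
    have e2 : i + 1 + d - (i + 1) = d := by omega
    have e3 : i + 1 + d - i = d + 1 := by omega
    rw [e1, e2, e3]
    have h1 : (i+1).choose 2 = i.choose 2 + i := by
      rw [Nat.choose_succ_succ]; simp [Nat.choose_one_right]; omega
    have hQ : ∀ m : ℕ, qPoch q q m ≠ 0 := qPoch_q_ne_zero hq1
    have r1 : qPoch q q (i+1+d+1) = qPoch q q (i+1+d) * (1 - q * q^(i+1+d)) := by
      rw [qPoch_succ]
    have r2 : qPoch q q (i+1) = qPoch q q i * (1 - q * q^i) := by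
      rw [qPoch_succ]
    have r3 : qPoch q q (d+1) = qPoch q q d * (1 - q * q^d) := by
      rw [qPoch_succ]
    rw [r1, r2, r3, h1]
    have := hQ (i+1+d); have := hQ i; have := hQ d
    have h4 : (1 : ℂ) - q * q ^ i ≠ 0 := by
      have := hQ (i+1); rw [r2] at this; exact right_ne_zero_of_mul this
    have h5 : (1 : ℂ) - q * q ^ d ≠ 0 := by
      have := hQ (d+1); rw [r3] at this; exact right_ne_zero_of_mul this
    field_simp
    ring_nf

omit hq1 in
lemma Bb_zero (n : ℕ) : Bb q n 0 = 1 := by simp [Bb, qPoch_zero]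

lemma Bb_succ_succ (n m : ℕ) :
    Bb q (n+1) (m+1) = Bb q n (m+1) + q^n * Bb q (n+1) m := by
  have hQ : ∀ k : ℕ, qPoch q q k ≠ 0 := qPoch_q_ne_zero hq1
  rw [Bb, Bb, Bb]
  have r1 : qPoch q (q^n) (m+1) = (1 - q^n) * qPoch q (q^(n+1)) m := by
    rw [qPoch_one_left, ← pow_succ]
  have r2 : qPoch q (q^(n+1)) (m+1) = qPoch q (q^(n+1)) m * (1 - q^(n+1) * q^m) := by
    rw [qPoch_succ]
  have r3 : qPoch q q (m+1) = qPoch q q m * (1 - q * q^m) := by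
    rw [qPoch_succ]
  rw [r1, r2, r3]
  have := hQ m
  have h4 : (1 : ℂ) - q * q ^ m ≠ 0 := by
    have := hQ (m+1); rw [r3] at this; exact right_ne_zero_of_mul this
  field_simp
  ring_nf
  linear_combination q ^ n * qPoch q (q * q ^ n) m * mul_inv_cancel₀ h4

omit hq1 in
lemma Aa_gt (n i : ℕ) (h : n < i) : Aa q n i = 0 := if_neg (by omega)

lemma keyS (n k : ℕ) (hk : 1 ≤ k) :
    ∑ i ∈ Finset.range (k+1), Aa q n i * Bb q n (k-i) = 0 := by
  induction n with
  | zero =>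
    apply Finset.sum_eq_zero
    intro i hi
    rcases Nat.eq_zero_or_pos i with rfl|hp
    · have hB : Bb q 0 k = 0 := by
        obtain ⟨m', rfl⟩ : ∃ m', k = m'+1 := ⟨k-1, by omega⟩
        rw [Bb, qPoch_one_left]
        simp
      simp [hB]
    · rw [Aa, if_neg (by omega)]; ring
  | succ n ih =>
    have hA0 : Aa q (n+1) 0 = 1 := Aa_zero hq1 (n+1)
    have hA0' : Aa q n 0 = 1 := Aa_zero hq1 n
    set Y : ℂ := ∑ i ∈ Finset.range k, Aa q n i * Bb q (n+1) (k-1-i) with hY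
    set X : ℂ := ∑ i ∈ Finset.range (k+1), Aa q n i * Bb q (n+1) (k-i) with hXdef
    have hX : X = (∑ i ∈ Finset.range k, Aa q n (i+1) * Bb q (n+1) (k-(i+1)))
        + Bb q (n+1) k := by
      rw [hXdef, Finset.sum_range_succ']
      simp [hA0']
    have hX2 : X = (∑ i ∈ Finset.range (k+1), Aa q n i * Bb q n (k-i)) + q^n * Y := by
      rw [hXdef, Finset.sum_range_succ, Finset.sum_range_succ, hY, Finset.mul_sum]
      rw [Nat.sub_self, Bb_zero, Bb_zero]
      have step : ∀ i ∈ Finset.range k, Aa q n i * Bb q (n+1) (k-i)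
          = Aa q n i * Bb q n (k-i) + q^n * (Aa q n i * Bb q (n+1) (k-1-i)) := by
        intro i hi
        have hik : i < k := Finset.mem_range.1 hi
        have e : k - i = (k-1-i) + 1 := by omega
        rw [e, Bb_succ_succ hq1]
        ring
      rw [Finset.sum_congr rfl step, Finset.sum_add_distrib]
      ring
    rw [Finset.sum_range_succ']
    have key : ∀ i ∈ Finset.range k, Aa q (n+1) (i+1) * Bb q (n+1) (k-(i+1))
        = Aa q n (i+1) * Bb q (n+1) (k-(i+1)) - q^n * (Aa q n i * Bb q (n+1) (k-1-i)) := by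
      intro i hi
      rw [Aa_succ_succ hq1]
      have e : k - (i+1) = k - 1 - i := by omega
      rw [e]; ring
    rw [Finset.sum_congr rfl key, Finset.sum_sub_distrib, ← Finset.mul_sum, ← hY]
    simp only [Nat.sub_zero, hA0, one_mul]
    linear_combination hX2 - hX + ih
    
end comb
lemma exp_neg_two_le {t : ℝ} (h0 : 0 ≤ t) (h2 : t ≤ 1/2) : Real.exp (-(2*t)) ≤ 1 - t := by
  have h1 : 2*t + 1 ≤ Real.exp (2*t) := Real.add_one_le_exp (2*t)
  have h3 : Real.exp (-(2*t)) * Real.exp (2*t) = 1 := by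
    rw [← Real.exp_add]; ring_nf; exact Real.exp_zero
  have h4 : 0 < Real.exp (2*t) := Real.exp_pos _
  nlinarith [Real.exp_pos (-(2*t))]

lemma geom_sum_le_inv_one_sub {r : ℝ} (h0 : 0 ≤ r) (h1 : r < 1) (s : Finset ℕ) :
    ∑ j ∈ s, r ^ j ≤ 1 / (1 - r) := by
  obtain ⟨m, hm⟩ := s.exists_nat_subset_range
  calc ∑ j ∈ s, r ^ j ≤ ∑ j ∈ Finset.range m, r ^ j :=
        Finset.sum_le_sum_of_subset_of_nonneg hm (fun i _ _ => by positivity)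
  _ = (1 - r^m) / (1 - r) := by
        rw [geom_sum_eq (by linarith : r ≠ 1)]
        rw [show (r^m - 1)/(r-1) = (1-r^m)/(1-r) by rw [div_eq_div_iff] <;> [ring; linarith; linarith]]
  _ ≤ 1 / (1 - r) := by
        apply div_le_div_of_nonneg_right _ (by linarith)
        nlinarith [pow_nonneg h0 m]

lemma qPoch_abs_le {q : ℂ} (hq1 : Complex.abs q < 1) (c : ℂ) (m : ℕ) :
    Complex.abs (qPoch q c m) ≤ Real.exp (Complex.abs c / (1 - Complex.abs q)) := by
  rw [qPoch, map_prod]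
  calc ∏ j ∈ Finset.range m, Complex.abs (1 - c * q ^ j)
      ≤ ∏ j ∈ Finset.range m, Real.exp (Complex.abs c * Complex.abs q ^ j) := by
        apply Finset.prod_le_prod (fun j _ => Complex.abs.nonneg _)
        intro j _
        calc Complex.abs (1 - c*q^j) ≤ Complex.abs 1 + Complex.abs (c*q^j) := by
              simpa [sub_eq_add_neg] using Complex.abs.add_le 1 (-(c*q^j))
        _ = 1 + Complex.abs c * Complex.abs q ^ j := by rw [map_one, map_mul, map_pow]
        _ ≤ Real.exp (Complex.abs c * Complex.abs q ^ j) := by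
              have := Real.add_one_le_exp (Complex.abs c * Complex.abs q ^ j)
              linarith
  _ = Real.exp (∑ j ∈ Finset.range m, Complex.abs c * Complex.abs q ^ j) := by
        rw [Real.exp_sum]
  _ ≤ Real.exp (Complex.abs c / (1 - Complex.abs q)) := by
        apply Real.exp_le_exp.2
        rw [← Finset.mul_sum]
        calc Complex.abs c * ∑ j ∈ Finset.range m, Complex.abs q ^ j
            ≤ Complex.abs c * (1 / (1 - Complex.abs q)) := by
              apply mul_le_mul_of_nonneg_left _ (Complex.abs.nonneg c)
              exact geom_sum_le_inv_one_sub (Complex.abs.nonneg q) hq1 _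
        _ = Complex.abs c / (1 - Complex.abs q) := by ring

lemma abs_one_sub_ge (z : ℂ) : 1 - Complex.abs z ≤ Complex.abs (1 - z) := by
  have := Complex.abs.add_le (1 - z) z
  simp at this
  linarith

lemma qPoch_abs_lower {q c : ℂ} (hq1 : Complex.abs q < 1) (h : ∀ j, 1 - c * q^j ≠ 0) :
    ∃ ε > 0, ∀ m, ε ≤ Complex.abs (qPoch q c m) := by
  have habsq : 0 ≤ Complex.abs q := Complex.abs.nonneg q
  have hc0 : 0 ≤ Complex.abs c := Complex.abs.nonneg c
  have htend : Filter.Tendsto (fun j : ℕ => Complex.abs c * Complex.abs q ^ j)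
      Filter.atTop (nhds 0) := by
    have := tendsto_pow_atTop_nhds_zero_of_lt_one habsq hq1
    simpa using this.const_mul (Complex.abs c)
  obtain ⟨J, hJ⟩ : ∃ J : ℕ, ∀ j ≥ J, Complex.abs c * Complex.abs q ^ j ≤ 1/2 := by
    have := (htend.eventually (eventually_le_nhds (by norm_num : (0:ℝ) < 1/2)))
    exact this.exists_forall_of_atTop
  set ε0 : ℝ := (Finset.range (J+1)).inf' (by simp) (fun m => Complex.abs (qPoch q c m))
    with hε0
  have hε0pos : 0 < ε0 := by
    rw [hε0, Finset.lt_inf'_iff]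
    intro b _
    have : qPoch q c b ≠ 0 := by
      rw [qPoch]
      exact Finset.prod_ne_zero_iff.2 (fun j _ => h j)
    exact Complex.abs.pos this
  set E : ℝ := Real.exp (-(2 * Complex.abs c / (1 - Complex.abs q))) with hE
  have hEpos : 0 < E := Real.exp_pos _
  have hE1 : E ≤ 1 := by
    rw [hE, Real.exp_le_one_iff]
    have h1q : 0 < 1 - Complex.abs q := by linarith
    have : 0 ≤ 2 * Complex.abs c / (1 - Complex.abs q) := by positivity
    linarith
  refine ⟨ε0 * E, mul_pos hε0pos hEpos, fun m => ?_⟩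
  rcases le_or_gt m J with hmJ | hmJ
  · have h1 : ε0 ≤ Complex.abs (qPoch q c m) :=
      Finset.inf'_le _ (Finset.mem_range.2 (by omega))
    nlinarith
  · obtain ⟨t, rfl⟩ : ∃ t, m = J + t := ⟨m - J, by omega⟩
    rw [qPoch_add, map_mul]
    have h1 : ε0 ≤ Complex.abs (qPoch q c J) :=
      Finset.inf'_le _ (Finset.mem_range.2 (by omega))
    have h2 : E ≤ Complex.abs (qPoch q (c * q^J) t) := by
      rw [qPoch, map_prod]
      have hfac : ∀ j ∈ Finset.range t,
          Real.exp (-(2 * (Complex.abs c * Complex.abs q ^ (J + j))))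
            ≤ Complex.abs (1 - c * q^J * q^j) := by
        intro j _
        have ht2 : Complex.abs c * Complex.abs q ^ (J + j) ≤ 1/2 := hJ (J+j) (by omega)
        have ht0 : 0 ≤ Complex.abs c * Complex.abs q ^ (J + j) := by positivity
        calc Real.exp (-(2 * (Complex.abs c * Complex.abs q ^ (J + j))))
            ≤ 1 - Complex.abs c * Complex.abs q ^ (J + j) := exp_neg_two_le ht0 ht2
        _ = 1 - Complex.abs (c * q^J * q^j) := by
              rw [map_mul, map_mul, map_pow, map_pow, pow_add]; ring_nf
        _ ≤ Complex.abs (1 - c * q^J * q^j) := abs_one_sub_ge _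
      calc E ≤ Real.exp (∑ j ∈ Finset.range t,
              -(2 * (Complex.abs c * Complex.abs q ^ (J + j)))) := by
            rw [hE, Real.exp_le_exp]
            have hsum : ∑ j ∈ Finset.range t, Complex.abs c * Complex.abs q ^ (J+j)
                ≤ Complex.abs c * (1 / (1 - Complex.abs q)) := by
              rw [← Finset.mul_sum]
              apply mul_le_mul_of_nonneg_left _ hc0
              calc ∑ j ∈ Finset.range t, Complex.abs q ^ (J+j)
                  ≤ ∑ j ∈ Finset.range t, Complex.abs q ^ j := by
                    apply Finset.sum_le_sum
                    intro j _
                    exact pow_le_pow_of_le_one habsq hq1.le (by omega)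
              _ ≤ 1 / (1 - Complex.abs q) := geom_sum_le_inv_one_sub habsq hq1 _
            have : ∑ j ∈ Finset.range t, -(2 * (Complex.abs c * Complex.abs q ^ (J+j)))
                = -(2 * ∑ j ∈ Finset.range t, Complex.abs c * Complex.abs q ^ (J+j)) := by
              simp [Finset.mul_sum]
            rw [this]
            have h2' : 2 * ∑ j ∈ Finset.range t, Complex.abs c * Complex.abs q ^ (J+j)
                ≤ 2 * Complex.abs c / (1 - Complex.abs q) := by
              calc 2 * ∑ j ∈ Finset.range t, Complex.abs c * Complex.abs q ^ (J+j)
                  ≤ 2 * (Complex.abs c * (1 / (1 - Complex.abs q))) := by linarith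
              _ = 2 * Complex.abs c / (1 - Complex.abs q) := by ring
            linarith
      _ = ∏ j ∈ Finset.range t,
              Real.exp (-(2 * (Complex.abs c * Complex.abs q ^ (J + j)))) := by
            rw [Real.exp_sum]
      _ ≤ ∏ j ∈ Finset.range t, Complex.abs (1 - c * q^J * q^j) :=
            Finset.prod_le_prod (fun j _ => (Real.exp_pos _).le) hfac
    calc ε0 * E ≤ Complex.abs (qPoch q c J) * Complex.abs (qPoch q (c * q^J) t) := by
          apply mul_le_mul h1 h2 hEpos.le (Complex.abs.nonneg _)
    _ = Complex.abs (qPoch q c J) * Complex.abs (qPoch q (c * q^J) t) := rfl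

lemma ch2 (i m : ℕ) : (i+m).choose 2 = i.choose 2 + m.choose 2 + i*m := by
  induction m with
  | zero => simp
  | succ m ih =>
    have h1 : ∀ t : ℕ, (t+1).choose 2 = t.choose 2 + t := by
      intro t; rw [Nat.choose_succ_succ]; simp [Nat.choose_one_right]; omega
    rw [show i + (m+1) = (i+m)+1 by omega, h1, ih, h1]
    ring

lemma one_sub_q_mul_pow_ne {q : ℂ} (hq1 : Complex.abs q < 1) (j : ℕ) :
    1 - q * q ^ j ≠ 0 := by
  apply one_sub_ne_zero_of_abs_lt
  rw [map_mul, map_pow]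
  calc Complex.abs q * Complex.abs q ^ j ≤ Complex.abs q * 1 := by
        gcongr
        exact pow_le_one₀ (Complex.abs.nonneg q) hq1.le
  _ < 1 := by rwa [mul_one]

lemma qPoch_ax_ne_zero {q a x : ℂ} (h : ∀ j : ℕ, 1 - a * q ^ j * x ≠ 0) (s m : ℕ) :
    qPoch q (a * q ^ s * x) m ≠ 0 := by
  rw [qPoch]
  apply Finset.prod_ne_zero_iff.2
  intro j _
  have e : a * q ^ s * x * q ^ j = a * q ^ (s+j) * x := by rw [pow_add]; ring
  rw [e]
  exact h (s+j)

lemma Tform (q a x u y : ℂ) (n i m : ℕ) (hq1 : Complex.abs q < 1)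
    (h : ∀ j : ℕ, 1 - a * q ^ j * x ≠ 0) (hin : i ≤ n) :
    (u * q) ^ (i.choose 2) * qBinom q n i * ((-(a * y)) ^ i / qPoch q (a * q ^ n * x) i) *
      (u ^ (m.choose 2) * qPoch q (q ^ n) m * (u ^ i * a * y) ^ m /
        (qPoch q q m * qPoch q (a * q ^ (n + i) * x) m))
    = u ^ ((i+m).choose 2) * (a*y)^(i+m) / qPoch q (a*q^n*x) (i+m) * (Aa q n i * Bb q n m) := by
  rw [Aa, if_pos hin, Bb, qBinom]
  have hsplit : qPoch q (a*q^n*x) (i+m)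
      = qPoch q (a*q^n*x) i * qPoch q (a * q^(n+i) * x) m := by
    rw [qPoch_add]
    congr 2
    rw [pow_add]; ring
  rw [hsplit, ch2]
  have h1 : qPoch q q m ≠ 0 := qPoch_q_ne_zero hq1 m
  have h2 : qPoch q q i ≠ 0 := qPoch_q_ne_zero hq1 i
  have h3 : qPoch q q (n-i) ≠ 0 := qPoch_q_ne_zero hq1 (n-i)
  have h4 : qPoch q (a*q^n*x) i ≠ 0 := qPoch_ax_ne_zero h n i
  have h5 : qPoch q (a*q^(n+i)*x) m ≠ 0 := qPoch_ax_ne_zero h (n+i) m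
  field_simp
  rw [mul_pow, mul_pow, mul_pow, neg_pow, pow_add, pow_add]
  ring

lemma t_summable (q a x u y : ℂ) (n i : ℕ) (hq1 : Complex.abs q < 1)
    (hu : Complex.abs u ≤ 1) (hay : Complex.abs (a * y) < 1)
    (h : ∀ j : ℕ, 1 - a * q ^ j * x ≠ 0) :
    Summable (fun m : ℕ => u ^ (m.choose 2) * qPoch q (q ^ n) m * (u ^ i * a * y) ^ m /
      (qPoch q q m * qPoch q (a * q ^ (n + i) * x) m)) := by
  obtain ⟨ε1, hε1, hl1⟩ := qPoch_abs_lower hq1 (one_sub_q_mul_pow_ne hq1)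
  obtain ⟨ε2, hε2, hl2⟩ := qPoch_abs_lower (c := a * q^(n+i) * x) hq1 (by
    intro j
    have e : a * q^(n+i) * x * q ^ j = a * q ^ (n+i+j) * x := by rw [pow_add]; ring
    rw [e]; exact h (n+i+j))
  set Cu : ℝ := Real.exp (Complex.abs (q^n) / (1 - Complex.abs q)) with hCu
  have hCupos : 0 < Cu := Real.exp_pos _
  set C : ℝ := Cu / (ε1 * ε2) with hC
  apply Summable.of_norm_bounded (g := fun m => C * Complex.abs (a*y) ^ m)
  · exact (summable_geometric_of_lt_one (Complex.abs.nonneg _) hay).mul_left C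
  intro m
  rw [Complex.norm_eq_abs, map_div₀, map_mul, map_mul, map_pow, map_mul, map_pow]
  have hb1 : Complex.abs u ^ (m.choose 2) ≤ 1 :=
    pow_le_one₀ (Complex.abs.nonneg u) hu
  have hb2 : Complex.abs (qPoch q (q^n) m) ≤ Cu := qPoch_abs_le hq1 _ m
  have hb3 : Complex.abs (u^i * a * y) ^ m ≤ Complex.abs (a*y) ^ m := by
    apply pow_le_pow_left₀ (Complex.abs.nonneg _)
    rw [map_mul, map_mul, map_pow]
    calc Complex.abs u ^ i * Complex.abs a * Complex.abs y
        ≤ 1 * Complex.abs a * Complex.abs y := by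
          gcongr
          exact pow_le_one₀ (Complex.abs.nonneg u) hu
    _ = Complex.abs (a * y) := by rw [map_mul]; ring
  have hden : ε1 * ε2 ≤ Complex.abs (qPoch q q m) * Complex.abs (qPoch q (a*q^(n+i)*x) m) :=
    mul_le_mul (hl1 m) (hl2 m) hε2.le (Complex.abs.nonneg _)
  calc Complex.abs u ^ m.choose 2 * Complex.abs (qPoch q (q^n) m) * Complex.abs (u^i*a*y) ^ m /
        (Complex.abs (qPoch q q m) * Complex.abs (qPoch q (a*q^(n+i)*x) m))
      ≤ (1 * Cu * Complex.abs (a*y)^m) / (ε1 * ε2) := by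
        apply div_le_div₀ (by positivity) _ (by positivity) hden
        exact mul_le_mul (mul_le_mul hb1 hb2 (Complex.abs.nonneg _) zero_le_one) hb3
          (pow_nonneg (Complex.abs.nonneg _) m) (by positivity)
  _ = C * Complex.abs (a*y) ^ m := by rw [hC]; ring

theorem stmt10 (q a x u y : ℂ) (n : ℕ)
    (hq0 : 0 < ‖q‖) (hq1 : ‖q‖ < 1)
    (hu : ‖u‖ ≤ 1) (hay : ‖a * y‖ < 1) (hx : x ≠ 0)
    (h : ∀ j : ℕ, 1 - a * q ^ j * x ≠ 0) :
    ∑ i ∈ Finset.range (n + 1),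
        (u * q) ^ (i.choose 2) * qBinom q n i *
          ((-(a * y)) ^ i / qPoch q (a * q ^ n * x) i) *
          ∑' m : ℕ,
            u ^ (m.choose 2) * qPoch q (q ^ n) m * (u ^ i * a * y) ^ m /
              (qPoch q q m * qPoch q (a * q ^ (n + i) * x) m) = 1 := by
  classical
  have hts : ∀ i : ℕ, Summable (fun m : ℕ =>
      u ^ (m.choose 2) * qPoch q (q ^ n) m * (u ^ i * a * y) ^ m /
        (qPoch q q m * qPoch q (a * q ^ (n + i) * x) m)) :=
    fun i => t_summable q a x u y n i hq1 hu hay h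
  set T : ℕ → ℕ → ℂ := fun i m =>
    (u * q) ^ (i.choose 2) * qBinom q n i * ((-(a * y)) ^ i / qPoch q (a * q ^ n * x) i) *
      (u ^ (m.choose 2) * qPoch q (q ^ n) m * (u ^ i * a * y) ^ m /
        (qPoch q q m * qPoch q (a * q ^ (n + i) * x) m)) with hT
  set F : ℕ → ℕ → ℂ := fun i k => if i ≤ k then T i (k - i) else 0 with hF
  have hinj : ∀ i : ℕ, Function.Injective (fun m : ℕ => m + i) :=
    fun i a' b' hab => by simpa using hab
  have hvan : ∀ i : ℕ, ∀ k ∉ Set.range (fun m : ℕ => m + i), F i k = 0 := by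
    intro i k hk
    rw [hF]
    simp only
    rw [if_neg]
    intro hik
    exact hk ⟨k - i, by simpa using Nat.sub_add_cancel hik⟩
  have hcomp : ∀ i : ℕ, (fun m : ℕ => F i (m + i)) = T i := by
    intro i
    funext m
    rw [hF]
    simp only
    rw [if_pos (by omega), Nat.add_sub_cancel]
  have hTsum : ∀ i : ℕ, Summable (T i) := fun i => (hts i).mul_left _
  have hFsum : ∀ i : ℕ, Summable (F i) := by
    intro i
    rw [← Function.Injective.summable_iff (hinj i) (hvan i)]
    show Summable (fun m : ℕ => F i (m + i))
    rw [hcomp i]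
    exact hTsum i
  have hre : ∀ i : ℕ, ∑' m, T i m = ∑' k, F i k := by
    intro i
    have hsupp : Function.support (F i) ⊆ Set.range (fun m : ℕ => m + i) := by
      intro k hk
      by_contra hc
      exact hk (hvan i k hc)
    rw [← Function.Injective.tsum_eq (hinj i) hsupp]
    exact tsum_congr (fun m => (congrFun (hcomp i) m).symm)
  calc ∑ i ∈ Finset.range (n + 1),
        (u * q) ^ (i.choose 2) * qBinom q n i *
          ((-(a * y)) ^ i / qPoch q (a * q ^ n * x) i) *
          ∑' m : ℕ,
            u ^ (m.choose 2) * qPoch q (q ^ n) m * (u ^ i * a * y) ^ m /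
              (qPoch q q m * qPoch q (a * q ^ (n + i) * x) m)
      = ∑ i ∈ Finset.range (n+1), ∑' k, F i k := by
        apply Finset.sum_congr rfl
        intro i _
        rw [← tsum_mul_left, ← hre i]
  _ = ∑' k, ∑ i ∈ Finset.range (n+1), F i k := (Summable.tsum_finsetSum (fun i _ => hFsum i)).symm
  _ = ∑' k : ℕ, (if k = 0 then (1:ℂ) else 0) := by
      apply tsum_congr
      intro k
      rcases Nat.eq_zero_or_pos k with rfl | hk
      · rw [if_pos rfl, Finset.sum_eq_single 0]
        · rw [hF]
          simp only [le_refl, if_pos, Nat.sub_self]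
          rw [hT]
          simp only [Nat.choose_self, pow_zero, one_mul, qPoch_zero, Nat.choose_zero_right]
          rw [qBinom, qPoch_zero]
          simp
          exact qPoch_q_ne_zero hq1 n
        · intro i _ hi0
          rw [hF]
          simp only
          rw [if_neg (by omega)]
        · intro hc
          exact absurd (Finset.mem_range.2 (by omega)) hc
      · rw [if_neg (by omega)]
        have hterm : ∀ i ∈ Finset.range (n+1), F i k
            = (u ^ (k.choose 2) * (a*y)^k / qPoch q (a*q^n*x) k) *
              (if i ≤ k then Aa q n i * Bb q n (k-i) else 0) := by
          intro i hi
          have hin : i ≤ n := by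
            have := Finset.mem_range.1 hi; omega
          rw [hF]
          simp only
          by_cases hik : i ≤ k
          · rw [if_pos hik, if_pos hik, hT]
            simp only
            rw [Tform q a x u y n i (k-i) hq1 h hin,
              show i + (k - i) = k from by omega]
          · rw [if_neg hik, if_neg hik, mul_zero]
        rw [Finset.sum_congr rfl hterm, ← Finset.mul_sum]
        have hswap : ∑ i ∈ Finset.range (n+1),
            (if i ≤ k then Aa q n i * Bb q n (k-i) else 0)
            = ∑ i ∈ Finset.range (k+1), Aa q n i * Bb q n (k-i) := by
          have h1 : ∑ i ∈ Finset.range (n+1),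
              (if i ≤ k then Aa q n i * Bb q n (k-i) else 0)
              = ∑ i ∈ Finset.range (n+k+2),
              (if i ≤ k then Aa q n i * Bb q n (k-i) else 0) := by
            apply Finset.sum_subset (Finset.range_subset_range.2 (by omega))
            intro i _ hnot
            have hni : n < i := by
              by_contra hcon
              exact hnot (Finset.mem_range.2 (by omega))
            by_cases hik : i ≤ k
            · rw [if_pos hik, Aa_gt n i hni, zero_mul]
            · rw [if_neg hik]
          have h2 : ∑ i ∈ Finset.range (k+1), Aa q n i * Bb q n (k-i)
              = ∑ i ∈ Finset.range (n+k+2),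
              (if i ≤ k then Aa q n i * Bb q n (k-i) else 0) := by
            rw [show (∑ i ∈ Finset.range (k+1), Aa q n i * Bb q n (k-i))
                = ∑ i ∈ Finset.range (k+1),
                  (if i ≤ k then Aa q n i * Bb q n (k-i) else 0) from
              Finset.sum_congr rfl (fun i hi => by
                rw [if_pos (by have := Finset.mem_range.1 hi; omega)])]
            apply Finset.sum_subset (Finset.range_subset_range.2 (by omega))
            intro i _ hnot
            have : k < i := by
              by_contra hcon
              exact hnot (Finset.mem_range.2 (by omega))
            rw [if_neg (by omega)]
          rw [h1, ← h2]
        rw [hswap, keyS hq1 n k hk, mul_zero]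
  _ = 1 := tsum_ite_eq 0 (fun _ => (1:ℂ))
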